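/- Let G be a finitely generated group. The number a_k(G) of index-k subgroups of G satisfies Hall's recursion: a_k(G) = |Hom(G, S_k)|/(k−1)! − Σ_{l=1}^{k−1} |Hom(G, S_{k−l})| · a_l(G) / (k−l)!. -/

import Mathlib

open Equiv Finset

namespace HallAux

variable {G : Type*} [Group G]

/-- A f.g. group has finitely many homs into a finite group. -/
lemma finite_hom (hG : Group.FG G) (H : Type*) [Group H] [Finite H] :
    Finite (G →* H) := by
  obtain ⟨S, hS, hSfin⟩ := Group.fg_iff.mp hG
  haveI : Finite S := hSfin
  refine Finite.of_injective (fun f => fun s : S => f s.1) ?_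
  intro f g h
  exact MonoidHom.eq_of_eqOn_dense hS (fun x hx => congrFun h ⟨x, hx⟩)

/-- `Perm` congruence as a `MulEquiv`. -/
def permCongrM {α β : Type*} (e : α ≃ β) : Perm α ≃* Perm β :=
  { e.permCongr with
    map_mul' := fun σ τ => by
      ext x
      simp [Equiv.permCongr_apply, Perm.mul_apply] }

/-- Transport of hom-sets along a `MulEquiv` on the target. -/
def homCongr {H K : Type*} [Group H] [Group K] (μ : H ≃* K) :
    (G →* H) ≃ (G →* K) where
  toFun f := μ.toMonoidHom.comp f
  invFun f := μ.symm.toMonoidHom.comp f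
  left_inv f := by ext g; simp
  right_inv f := by ext g; simp

def IsFullOrbit {α : Type*} (f : G →* Perm α) (a : α) : Prop := ∀ x, ∃ g, f g a = x

/-- Transport of full-orbit homs along an equivalence of the acted set. -/
def fullOrbitCongr {α β : Type*} (e : α ≃ β) (a : α) :
    {f : G →* Perm α // IsFullOrbit f a} ≃ {f : G →* Perm β // IsFullOrbit f (e a)} :=
  (homCongr (permCongrM e)).subtypeEquiv (by
    intro f
    constructor
    · intro hf y
      obtain ⟨g, hg⟩ := hf (e.symm y)
      exact ⟨g, by simp [homCongr, permCongrM, Equiv.permCongr_apply, hg]⟩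
    · intro hf y
      obtain ⟨g, hg⟩ := hf (e y)
      refine ⟨g, ?_⟩
      have : e (f g (e.symm (e a))) = e y := by
        simpa [homCongr, permCongrM, Equiv.permCongr_apply] using hg
      simpa using e.injective this)


/-- Number of bijections sending a given point to a given point. -/
lemma card_equiv_fix {α β : Type*} [Fintype α] [Fintype β] [DecidableEq β]
    (a : α) (b : β) (h : Fintype.card α = Fintype.card β) :
    Nat.card {e : α ≃ β // e a = b} = (Fintype.card α - 1).factorial := by
  classical
  -- fibers of `e ↦ e a` all have the same cardinality
  have key : ∀ b' : β, Nat.card {e : α ≃ β // e a = b'} = Nat.card {e : α ≃ β // e a = b} := by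
    intro b'
    refine Nat.card_congr ⟨fun e => ⟨e.1.trans (Equiv.swap b' b), by simp [e.2]⟩,
      fun e => ⟨e.1.trans (Equiv.swap b' b), by simp [e.2, Equiv.swap_apply_right]⟩, ?_, ?_⟩
    · rintro ⟨e, he⟩
      ext x
      simp [Equiv.trans_assoc, Equiv.swap_swap]
    · rintro ⟨e, he⟩
      ext x
      simp [Equiv.trans_assoc, Equiv.swap_swap]
  have hcard : Nat.card (α ≃ β) = Fintype.card β * Nat.card {e : α ≃ β // e a = b} := by
    rw [← Nat.card_congr (Equiv.sigmaFiberEquiv (fun e : α ≃ β => e a))]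
    haveI : ∀ b' : β, Fintype {e : α ≃ β // e a = b'} := fun _ => Fintype.ofFinite _
    rw [Nat.card_eq_fintype_card, Fintype.card_sigma]
    simp_rw [← Nat.card_eq_fintype_card, key]
    simp [Finset.sum_const, Finset.card_univ]
  have htot : Nat.card (α ≃ β) = (Fintype.card α).factorial := by
    rw [Nat.card_eq_fintype_card, Fintype.card_equiv (Fintype.equivOfCardEq h)]
  have hpos : 0 < Fintype.card α := Fintype.card_pos_iff.mpr ⟨a⟩
  have hfact : Fintype.card α * (Fintype.card α - 1).factorial = (Fintype.card α).factorial :=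
    Nat.succ_pred_eq_of_pos hpos ▸ (Nat.factorial_succ _).symm
  rw [hcard, ← h] at htot
  exact Nat.eq_of_mul_eq_mul_left hpos (htot.trans hfact.symm)


/-- The stabilizer of `0` under a hom to a permutation group. -/
def stab (n : ℕ) (f : G →* Perm (Fin (n + 1))) : Subgroup G where
  carrier := {g | f g 0 = 0}
  one_mem' := by simp
  mul_mem' := by
    intro a b ha hb
    simp only [Set.mem_setOf_eq] at *
    rw [map_mul, Perm.mul_apply, hb, ha]
  inv_mem' := by
    intro a ha
    simp only [Set.mem_setOf_eq] at *
    rw [map_inv]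
    conv_lhs => rw [← ha]
    exact Equiv.symm_apply_apply _ _

lemma mem_stab {n : ℕ} {f : G →* Perm (Fin (n + 1))} {g : G} :
    g ∈ stab n f ↔ f g 0 = 0 := Iff.rfl

/-- The based bijection `G ⧸ H ≃ Fin (n+1)` induced by a full-orbit hom with stabilizer `H`. -/
noncomputable def toQuotH {n : ℕ} (H : Subgroup G) (f : G →* Perm (Fin (n + 1)))
    (hiff : ∀ g, g ∈ H ↔ f g 0 = 0) (hf : IsFullOrbit f 0) : G ⧸ H ≃ Fin (n + 1) := by
  refine Equiv.ofBijective (Quotient.lift (fun g => f g 0) ?_) ⟨?_, ?_⟩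
  · intro a b hab
    have h1 : f (a⁻¹ * b) 0 = 0 := (hiff _).mp (QuotientGroup.leftRel_apply.mp hab)
    have : f (a * (a⁻¹ * b)) 0 = f a 0 := by rw [map_mul, Perm.mul_apply, h1]
    simpa [mul_inv_cancel_left] using this.symm
  · intro q₁ q₂
    induction q₁ using Quotient.inductionOn with | _ a =>
    induction q₂ using Quotient.inductionOn with | _ b =>
    intro hab
    have hab' : f a 0 = f b 0 := hab
    refine (QuotientGroup.eq).mpr ((hiff _).mpr ?_)
    rw [map_mul, Perm.mul_apply, map_inv]
    rw [← hab', Perm.inv_def, Equiv.symm_apply_apply]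
  · intro x
    obtain ⟨g, hg⟩ := hf x
    exact ⟨QuotientGroup.mk g, hg⟩

@[simp] lemma toQuotH_mk {n : ℕ} (H : Subgroup G) (f : G →* Perm (Fin (n + 1)))
    (hiff) (hf) (g : G) : toQuotH H f hiff hf (QuotientGroup.mk g) = f g 0 := rfl

/-- The hom built from a based bijection `G ⧸ H ≃ Fin (n+1)`. -/
def ofQuot {n : ℕ} (H : Subgroup G) (e : G ⧸ H ≃ Fin (n + 1)) : G →* Perm (Fin (n + 1)) :=
  (permCongrM e).toMonoidHom.comp (MulAction.toPermHom G (G ⧸ H))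

@[simp] lemma ofQuot_apply {n : ℕ} (H : Subgroup G) (e : G ⧸ H ≃ Fin (n + 1)) (g : G)
    (x : Fin (n + 1)) : ofQuot H e g x = e (g • e.symm x) := rfl

lemma ofQuot_mk {n : ℕ} (H : Subgroup G) (e : G ⧸ H ≃ Fin (n + 1)) (he : e ((1 : G) : G ⧸ H) = 0) (g : G) :
    ofQuot H e g 0 = e (QuotientGroup.mk g) := by
  have h0 : e.symm 0 = ((1 : G) : G ⧸ H) := by rw [← he, Equiv.symm_apply_apply]
  rw [ofQuot_apply, h0]
  congr 1
  rw [MulAction.Quotient.smul_mk]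
  simp

lemma ofQuot_full {n : ℕ} (H : Subgroup G) (e : G ⧸ H ≃ Fin (n + 1)) (he : e ((1 : G) : G ⧸ H) = 0) :
    IsFullOrbit (ofQuot H e) 0 := by
  intro x
  obtain ⟨g, hg⟩ := QuotientGroup.mk_surjective (e.symm x)
  exact ⟨g, by rw [ofQuot_mk H e he, hg, Equiv.apply_symm_apply]⟩

lemma stab_ofQuot {n : ℕ} (H : Subgroup G) (e : G ⧸ H ≃ Fin (n + 1)) (he : e ((1 : G) : G ⧸ H) = 0) :
    stab n (ofQuot H e) = H := by
  ext g
  rw [mem_stab, ofQuot_mk H e he, ← he]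
  rw [e.apply_eq_iff_eq, QuotientGroup.eq]
  simp

/-- The fiber of the stabilizer map over a fixed subgroup `H`. -/
noncomputable def fiberEquiv (n : ℕ) (H : Subgroup G) :
    {f : {f : G →* Perm (Fin (n + 1)) // IsFullOrbit f 0} // stab n f.1 = H} ≃
      {e : G ⧸ H ≃ Fin (n + 1) // e ((1 : G) : G ⧸ H) = 0} where
  toFun f := ⟨toQuotH H f.1.1 (fun g => (SetLike.ext_iff.mp f.2 g).symm.trans mem_stab) f.1.2, by
    show f.1.1 (1 : G) 0 = 0
    simp⟩
  invFun e := ⟨⟨ofQuot H e.1, ofQuot_full H e.1 e.2⟩, stab_ofQuot H e.1 e.2⟩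
  left_inv := by
    rintro ⟨⟨f, hf⟩, hst⟩
    refine Subtype.ext (Subtype.ext ?_)
    refine MonoidHom.ext fun g => Equiv.ext fun x => ?_
    show ofQuot H _ g x = f g x
    rw [ofQuot_apply]
    obtain ⟨g₀, hg₀⟩ := QuotientGroup.mk_surjective
      ((toQuotH H f (fun g => hst ▸ Iff.rfl) hf).symm x)
    have hx : f g₀ 0 = x := by
      rw [← toQuotH_mk H f (fun g => hst ▸ Iff.rfl) hf, hg₀, Equiv.apply_symm_apply]
    rw [← hg₀, MulAction.Quotient.smul_mk, toQuotH_mk, smul_eq_mul, map_mul, Perm.mul_apply, hx]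
  right_inv := by
    rintro ⟨e, he⟩
    refine Subtype.ext (Equiv.ext ?_)
    intro q
    induction q using Quotient.inductionOn with | _ g =>
    rw [toQuotH_mk]
    exact ofQuot_mk H e he g


lemma nat_card_sigma {ι : Type*} [Fintype ι] (κ : ι → Type*) [∀ i, Finite (κ i)] :
    Nat.card (Σ i, κ i) = ∑ i, Nat.card (κ i) := by
  haveI : ∀ i, Fintype (κ i) := fun i => Fintype.ofFinite _
  rw [Nat.card_eq_fintype_card, Fintype.card_sigma]
  exact Finset.sum_congr rfl fun i _ => (Nat.card_eq_fintype_card).symm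

lemma stab_index {n : ℕ} (f : G →* Perm (Fin (n + 1))) (hf : IsFullOrbit f 0) :
    (stab n f).index = n + 1 := by
  rw [Subgroup.index_eq_card, Nat.card_congr (toQuotH (stab n f) f (fun g => Iff.rfl) hf)]
  simp [Nat.card_eq_fintype_card]

noncomputable def basedEquivOf {n : ℕ} (H : Subgroup G) (hH : H.index = n + 1) :
    {e : G ⧸ H ≃ Fin (n + 1) // e ((1 : G) : G ⧸ H) = 0} := by
  have hcard : Nat.card (G ⧸ H) = n + 1 := by rw [← Subgroup.index_eq_card, hH]
  haveI : Finite (G ⧸ H) := Nat.finite_of_card_ne_zero (by omega)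
  haveI := Fintype.ofFinite (G ⧸ H)
  have hc : Fintype.card (G ⧸ H) = n + 1 := by rw [← Nat.card_eq_fintype_card, hcard]
  exact ⟨(Fintype.equivFinOfCardEq hc).trans
      (Equiv.swap (Fintype.equivFinOfCardEq hc ((1 : G) : G ⧸ H)) 0), by
    simp [Equiv.swap_apply_left]⟩

lemma card_full (hG : Group.FG G) (n : ℕ) :
    Nat.card {f : G →* Perm (Fin (n + 1)) // IsFullOrbit f 0} =
      Nat.card {H : Subgroup G // H.index = n + 1} * n.factorial := by
  classical
  haveI : Finite (G →* Perm (Fin (n + 1))) := finite_hom hG _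
  haveI : Finite {f : G →* Perm (Fin (n + 1)) // IsFullOrbit f 0} := Subtype.finite
  let F : {f : G →* Perm (Fin (n + 1)) // IsFullOrbit f 0} → {H : Subgroup G // H.index = n + 1} :=
    fun f => ⟨stab n f.1, stab_index f.1 f.2⟩
  haveI : Finite {H : Subgroup G // H.index = n + 1} := by
    refine Finite.of_injective
      (fun H => ((fiberEquiv n H.1).symm (basedEquivOf H.1 H.2)).1) ?_
    intro H₁ H₂ h
    have h₁ := ((fiberEquiv n H₁.1).symm (basedEquivOf H₁.1 H₁.2)).2
    have h₂ := ((fiberEquiv n H₂.1).symm (basedEquivOf H₂.1 H₂.2)).2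
    refine Subtype.ext ?_
    rw [← h₁, ← h₂]
    exact congrArg (fun f => stab n f.1) h
  haveI := Fintype.ofFinite {H : Subgroup G // H.index = n + 1}
  rw [Nat.card_congr (Equiv.sigmaFiberEquiv F).symm, nat_card_sigma]
  have hfib : ∀ H : {H : Subgroup G // H.index = n + 1},
      Nat.card {f // F f = H} = n.factorial := by
    intro H
    have e1 : {f : {f : G →* Perm (Fin (n + 1)) // IsFullOrbit f 0} // F f = H} ≃
        {f : {f : G →* Perm (Fin (n + 1)) // IsFullOrbit f 0} // stab n f.1 = H.1} :=
      Equiv.subtypeEquivRight (fun f => Subtype.ext_iff)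
    rw [Nat.card_congr (e1.trans (fiberEquiv n H.1))]
    have hcard : Nat.card (G ⧸ H.1) = n + 1 := by rw [← Subgroup.index_eq_card, H.2]
    haveI : Finite (G ⧸ H.1) := Nat.finite_of_card_ne_zero (by omega)
    haveI := Fintype.ofFinite (G ⧸ H.1)
    have hc : Fintype.card (G ⧸ H.1) = n + 1 := by rw [← Nat.card_eq_fintype_card, hcard]
    rw [card_equiv_fix ((1 : G) : G ⧸ H.1) 0 (by simp [hc]), hc]
    simp
  simp only [hfib, Finset.sum_const, Finset.card_univ, smul_eq_mul]
  rw [Nat.card_eq_fintype_card]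


section StepA

variable {X : Type*} [Fintype X] [DecidableEq X]

open scoped Classical in
/-- The orbit of `p` under a hom to the permutation group, as a finset. -/
noncomputable def orbF (f : G →* Perm X) (p : X) : Finset X :=
  Finset.univ.filter (fun x => ∃ g, f g p = x)

lemma mem_orbF {f : G →* Perm X} {p x : X} : x ∈ orbF f p ↔ ∃ g, f g p = x := by
  simp [orbF]

lemma self_mem_orbF (f : G →* Perm X) (p : X) : p ∈ orbF f p :=
  mem_orbF.mpr ⟨1, by simp⟩

lemma orbF_inv {f : G →* Perm X} {p : X} {s : Finset X} (h : orbF f p = s) :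
    ∀ (g : G) (x : X), x ∈ s → f g x ∈ s := by
  intro g x hx
  rw [← h] at hx ⊢
  obtain ⟨g₀, hg₀⟩ := mem_orbF.mp hx
  exact mem_orbF.mpr ⟨g * g₀, by rw [map_mul, Perm.mul_apply, hg₀]⟩

/-- Restrict a hom to permutations preserving a predicate. -/
def restrictHom (f : G →* Perm X) (q : X → Prop)
    (hq : ∀ (g : G) (x : X), q x → q (f g x)) : G →* Perm {x : X // q x} where
  toFun g := (f g).subtypePerm (fun x => ⟨fun hx => by
    have := hq g⁻¹ _ hx
    rwa [map_inv, Perm.inv_def, Equiv.symm_apply_apply] at this, fun hx => hq g x hx⟩)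
  map_one' := by ext x; simp
  map_mul' a b := by ext x; simp [Perm.mul_apply]; rfl

@[simp] lemma restrictHom_apply (f : G →* Perm X) (q : X → Prop) (hq) (g : G)
    (x : {x : X // q x}) : (restrictHom f q hq g x : X) = f g x := rfl

/-- Combine homs on a finset and its complement. -/
def combineHom (s : Finset X) (f₁ : G →* Perm {x : X // x ∈ s})
    (f₂ : G →* Perm {x : X // ¬ x ∈ s}) : G →* Perm X where
  toFun g := Equiv.Perm.subtypeCongr (f₁ g) (f₂ g)
  map_one' := by
    ext x
    by_cases h : x ∈ s <;>
      simp [Perm.subtypeCongr.left_apply, Perm.subtypeCongr.right_apply, h]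
  map_mul' a b := by
    ext x
    by_cases h : x ∈ s
    · simp [Perm.mul_apply, Perm.subtypeCongr.left_apply, h,
        Perm.subtypeCongr.left_apply_subtype]
    · simp [Perm.mul_apply, Perm.subtypeCongr.right_apply, h,
        Perm.subtypeCongr.right_apply_subtype]

lemma combineHom_left {s : Finset X} {f₁ : G →* Perm {x : X // x ∈ s}}
    {f₂ : G →* Perm {x : X // ¬ x ∈ s}} (g : G) {x : X} (h : x ∈ s) :
    combineHom s f₁ f₂ g x = (f₁ g ⟨x, h⟩ : X) :=
  Perm.subtypeCongr.left_apply _ _ h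

/-- The fiber of the orbit map over a finset `s` containing `p`. -/
noncomputable def orbFiberEquiv (s : Finset X) (p : X) (hp : p ∈ s) :
    {f : G →* Perm X // orbF f p = s} ≃
      {f₁ : G →* Perm {x : X // x ∈ s} // IsFullOrbit f₁ ⟨p, hp⟩} ×
        (G →* Perm {x : X // ¬ x ∈ s}) where
  toFun f :=
    (⟨restrictHom f.1 (· ∈ s) (orbF_inv f.2), by
      rintro ⟨x, hx⟩
      obtain ⟨g, hg⟩ := mem_orbF.mp (f.2 ▸ hx)
      exact ⟨g, Subtype.ext (by simpa using hg)⟩⟩,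
     restrictHom f.1 (¬ · ∈ s) (fun g x hx h => hx (by
        have := orbF_inv f.2 g⁻¹ _ h
        rwa [map_inv, Perm.inv_def, Equiv.symm_apply_apply] at this)))
  invFun f := ⟨combineHom s f.1.1 f.2, by
    ext x
    rw [mem_orbF]
    constructor
    · rintro ⟨g, rfl⟩
      rw [combineHom_left g hp]
      exact (f.1.1 g ⟨p, hp⟩).2
    · intro hx
      obtain ⟨g, hg⟩ := f.1.2 ⟨x, hx⟩
      exact ⟨g, by rw [combineHom_left g hp, hg]⟩⟩
  left_inv f := by
    refine Subtype.ext (MonoidHom.ext fun g => Equiv.ext fun x => ?_)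
    show Equiv.Perm.subtypeCongr _ _ x = f.1 g x
    by_cases h : x ∈ s
    · rw [Perm.subtypeCongr.left_apply _ _ h]; rfl
    · rw [Perm.subtypeCongr.right_apply _ _ h]; rfl
  right_inv f := by
    refine Prod.ext (Subtype.ext (MonoidHom.ext fun g => Equiv.ext fun x => ?_))
      (MonoidHom.ext fun g => Equiv.ext fun x => ?_)
    · refine Subtype.ext ?_
      show (combineHom s f.1.1 f.2 g x : X) = _
      rw [combineHom_left g x.2]
    · exact Subtype.ext (Perm.subtypeCongr.right_apply (f.1.1 g) (f.2 g) x.2)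

end StepA


variable (G) in
/-- Number of full-orbit homs to `S_{j+1}`. -/
noncomputable def T (j : ℕ) : ℕ :=
  Nat.card {f : G →* Perm (Fin (j + 1)) // IsFullOrbit f 0}

variable (G) in
/-- Number of homs to `S_n`. -/
noncomputable def N (n : ℕ) : ℕ := Nat.card (G →* Perm (Fin n))

lemma card_full_congr {α : Type*} [Fintype α] (a : α) {j : ℕ}
    (h : Fintype.card α = j + 1) :
    Nat.card {f : G →* Perm α // IsFullOrbit f a} = T G j := by
  classical
  set e₀ := Fintype.equivFinOfCardEq h with he₀
  set e := e₀.trans (Equiv.swap (e₀ a) 0) with he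
  have hea : e a = 0 := by simp [he, Equiv.swap_apply_left]
  have := fullOrbitCongr (G := G) e a
  rw [hea] at this
  exact Nat.card_congr this

lemma card_hom_congr {α : Type*} [Fintype α] {n : ℕ} (h : Fintype.card α = n) :
    Nat.card (G →* Perm α) = N G n :=
  Nat.card_congr (homCongr (permCongrM (Fintype.equivFinOfCardEq h)))

lemma homCard_decomp (hG : Group.FG G) (m : ℕ) :
    N G (m + 1) = ∑ j ∈ Finset.range (m + 1), m.choose j * (T G j * N G (m - j)) := by
  classical
  haveI : Finite (G →* Perm (Fin (m + 1))) := finite_hom hG _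
  set p : Fin (m + 1) := 0 with hp
  let Φ : (G →* Perm (Fin (m + 1))) → {O : Finset (Fin (m + 1)) // p ∈ O} :=
    fun f => ⟨orbF f p, self_mem_orbF f p⟩
  rw [N, Nat.card_congr (Equiv.sigmaFiberEquiv Φ).symm, nat_card_sigma]
  have hfib : ∀ O : {O : Finset (Fin (m + 1)) // p ∈ O},
      Nat.card {f // Φ f = O} = T G (O.1.card - 1) * N G (m + 1 - O.1.card) := by
    intro O
    have e1 : {f : G →* Perm (Fin (m + 1)) // Φ f = O} ≃
        {f : G →* Perm (Fin (m + 1)) // orbF f p = O.1} :=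
      Equiv.subtypeEquivRight (fun f => Subtype.ext_iff)
    rw [Nat.card_congr (e1.trans (orbFiberEquiv O.1 p O.2)), Nat.card_prod]
    have hO : 0 < O.1.card := Finset.card_pos.mpr ⟨p, O.2⟩
    have hA : Nat.card {f₁ : G →* Perm {x : Fin (m + 1) // x ∈ O.1} //
          IsFullOrbit f₁ ⟨p, O.2⟩} = T G (O.1.card - 1) :=
      card_full_congr _ (by rw [Fintype.card_coe]; omega)
    have hB : Nat.card (G →* Perm {x : Fin (m + 1) // ¬ x ∈ O.1}) =
        N G (m + 1 - O.1.card) :=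
      card_hom_congr (by rw [Fintype.card_subtype_compl, Fintype.card_coe, Fintype.card_fin])
    rw [hA, hB]
  simp_rw [hfib]
  -- reindex: subtype sum → powerset sum → binomial sum
  rw [← Finset.sum_subtype (p := fun O : Finset (Fin (m + 1)) => p ∈ O)
      (Finset.univ.filter (fun O : Finset (Fin (m + 1)) => p ∈ O))
      (fun O => by simp)
      (fun O : Finset (Fin (m + 1)) => T G (O.card - 1) * N G (m + 1 - O.card))]
  have h2 : ∑ O ∈ Finset.univ.filter (fun O : Finset (Fin (m + 1)) => p ∈ O),
        T G (O.card - 1) * N G (m + 1 - O.card)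
      = ∑ s ∈ (Finset.univ.erase p).powerset,
          T G s.card * N G (m - s.card) := by
    refine Finset.sum_nbij' (fun O => O.erase p) (fun s => insert p s) ?_ ?_ ?_ ?_ ?_
    · intro O hO
      rw [Finset.mem_powerset]
      exact Finset.erase_subset_erase p (Finset.subset_univ O)
    · intro s hs
      rw [Finset.mem_filter]
      exact ⟨Finset.mem_univ _, Finset.mem_insert_self p s⟩
    · intro O hO
      exact Finset.insert_erase (Finset.mem_filter.mp hO).2
    · intro s hs
      refine Finset.erase_insert fun hps => ?_
      have := Finset.mem_powerset.mp hs hps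
      exact (Finset.notMem_erase p _) this
    · intro O hO
      have hpO : p ∈ O := (Finset.mem_filter.mp hO).2
      have hcO : 0 < O.card := Finset.card_pos.mpr ⟨p, hpO⟩
      rw [Finset.card_erase_of_mem hpO]
      have harith : m + 1 - O.card = m - (O.card - 1) := by omega
      rw [harith]
  rw [h2]
  have h3 : (Finset.univ.erase p).card = m := by
    rw [Finset.card_erase_of_mem (Finset.mem_univ p), Finset.card_univ, Fintype.card_fin]
    omega
  have h4 := Finset.sum_powerset_apply_card
    (fun c => T G c * N G (m - c)) (x := Finset.univ.erase p)
  rw [h4, h3]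
  exact Finset.sum_congr rfl fun j _ => smul_eq_mul _ _


lemma T_eq (hG : Group.FG G) (n : ℕ) :
    T G n = Nat.card {H : Subgroup G // H.index = n + 1} * n.factorial :=
  card_full hG n

lemma N_zero : N G 0 = 1 := by
  haveI : Subsingleton (Perm (Fin 0)) := ⟨fun a b => Equiv.ext fun x => x.elim0⟩
  rw [N, Nat.card_eq_one_iff_unique]
  exact ⟨⟨fun f g => MonoidHom.ext fun x => Subsingleton.elim _ _⟩, ⟨1⟩⟩


end HallAux

open HallAux Finset in
/-- Hall's recursion for the number `a_k(G)` of index-`k` subgroups of a finitely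
generated group `G`:
`a_k(G) = |Hom(G, S_k)|/(k−1)! − ∑_{l=1}^{k−1} |Hom(G, S_{k−l})| · a_l(G) / (k−l)!`. -/
theorem hall_recursion {G : Type*} [Group G] (hG : Group.FG G) (k : ℕ) (hk : 1 ≤ k) :
    (Nat.card {H : Subgroup G // H.index = k} : ℚ) =
      (Nat.card (G →* Equiv.Perm (Fin k)) : ℚ) / (Nat.factorial (k - 1)) -
        ∑ l ∈ Finset.Icc 1 (k - 1),
          (Nat.card (G →* Equiv.Perm (Fin (k - l))) : ℚ) *
            (Nat.card {H : Subgroup G // H.index = l} : ℚ) / (Nat.factorial (k - l)) := by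
  classical
  obtain ⟨m, rfl⟩ : ∃ m, k = m + 1 := ⟨k - 1, by omega⟩
  have hdec := homCard_decomp hG m
  simp only [T_eq hG] at hdec
  have hQ := congrArg (fun n : ℕ => (n : ℚ)) hdec
  push_cast at hQ
  have hm : (m.factorial : ℚ) ≠ 0 := Nat.cast_ne_zero.mpr (Nat.factorial_ne_zero m)
  have key : (N G (m + 1) : ℚ) / m.factorial
      = ∑ j ∈ Finset.range (m + 1),
          (Nat.card {H : Subgroup G // H.index = j + 1} : ℚ) * (N G (m - j))
            / (m - j).factorial := by
    rw [hQ, Finset.sum_div]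
    refine Finset.sum_congr rfl fun j hj => ?_
    have hj' : j ≤ m := by
      have := Finset.mem_range.mp hj; omega
    have hfact : ((m.choose j : ℚ) * (j.factorial : ℚ)) * ((m - j).factorial : ℚ)
        = (m.factorial : ℚ) := by
      exact_mod_cast congrArg (fun n : ℕ => (n : ℚ))
        (Nat.choose_mul_factorial_mul_factorial hj')
    have hmj : ((m - j).factorial : ℚ) ≠ 0 :=
      Nat.cast_ne_zero.mpr (Nat.factorial_ne_zero _)
    rw [div_eq_div_iff hm hmj]
    linear_combination ((Nat.card {H : Subgroup G // H.index = j + 1} : ℚ)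
      * (N G (m - j) : ℚ)) * hfact
  rw [Finset.sum_range_succ] at key
  simp only [Nat.sub_self, N_zero, Nat.factorial_zero, Nat.cast_one, div_one, mul_one] at key
  simp only [Nat.add_sub_cancel]
  have hNdef : ∀ n : ℕ, (Nat.card (G →* Equiv.Perm (Fin n)) : ℚ) = (N G n : ℚ) :=
    fun n => rfl
  simp only [hNdef]
  have hreidx : ∑ l ∈ Finset.Icc 1 m,
        (N G (m + 1 - l) : ℚ) * (Nat.card {H : Subgroup G // H.index = l} : ℚ)
          / (m + 1 - l).factorial
      = ∑ j ∈ Finset.range m,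
          (Nat.card {H : Subgroup G // H.index = j + 1} : ℚ) * (N G (m - j))
            / (m - j).factorial := by
    refine Finset.sum_nbij' (fun l => l - 1) (fun j => j + 1) ?_ ?_ ?_ ?_ ?_
    · intro l hl
      rw [Finset.mem_Icc] at hl
      rw [Finset.mem_range]
      omega
    · intro j hj
      rw [Finset.mem_range] at hj
      rw [Finset.mem_Icc]
      omega
    · intro l hl
      rw [Finset.mem_Icc] at hl
      omega
    · intro j _
      omega
    · intro l hl
      rw [Finset.mem_Icc] at hl
      have e1 : l - 1 + 1 = l := by omega
      have e2 : m - (l - 1) = m + 1 - l := by omega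
      rw [e1, e2]
      ring
  linarith [key, hreidx]
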